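/- arXiv:1411.7496 — 2 statements merged into one kernel-verified Lean document; each statement's English description precedes it below -/
import Mathlib

section
/- Let (W,S) be a Coxeter system and let s, t, u ∈ S be pairwise distinct generators such that the orders m_{st}, m_{tu}, m_{us} of st, tu and us are each at least 3 (possibly infinite). Then the subgroup of W generated by the two elements u and tst is infinite. -/
open Real Finsupp
namespace CoxInfAux
variable {B : Type*} (M : CoxeterMatrix B)

noncomputable def kk (i j : B) : ℝ :=
  if M i j = 0 then -1 else -Real.cos (Real.pi / (M i j : ℝ))

lemma kk_symm (i j : B) : kk M i j = kk M j i := by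
  unfold kk; rw [M.symmetric i j]

lemma kk_diag (i : B) : kk M i i = 1 := by
  simp [kk, M.diagonal i]

lemma kk_le_neg_half {i j : B} (h : M i j = 0 ∨ 3 ≤ M i j) : kk M i j ≤ -(1/2 : ℝ) := by
  rcases h with h | h
  · simp [kk, h]; norm_num
  · rw [kk, if_neg (by omega)]
    have hm3 : (3:ℝ) ≤ (M i j : ℝ) := by exact_mod_cast h
    have h1 : Real.pi / (M i j : ℝ) ≤ Real.pi / 3 :=
      div_le_div_of_nonneg_left Real.pi_pos.le (by norm_num) hm3
    have h2 : (0:ℝ) ≤ Real.pi / (M i j : ℝ) := by positivity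
    have h3 : Real.pi / 3 ≤ Real.pi := by nlinarith [Real.pi_pos]
    have := Real.cos_le_cos_of_nonneg_of_le_pi h2 h3 h1
    rw [Real.cos_pi_div_three] at this
    linarith

noncomputable def form (i : B) : (B →₀ ℝ) →ₗ[ℝ] ℝ :=
  Finsupp.linearCombination ℝ (kk M i)

noncomputable def ee (i : B) : B →₀ ℝ := Finsupp.single i 1

lemma form_ee (i j : B) : form M i (ee j) = kk M i j := by
  simp [form, ee]

noncomputable def sigmaL (i : B) : (B →₀ ℝ) →ₗ[ℝ] (B →₀ ℝ) :=
  LinearMap.id - ((2:ℝ) • form M i).smulRight (ee i)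

lemma sigmaL_apply (i : B) (v : B →₀ ℝ) :
    sigmaL M i v = v - (2 * form M i v) • ee i := by
  simp [sigmaL, smul_smul]

lemma sigmaL_invol (i : B) (v : B →₀ ℝ) : sigmaL M i (sigmaL M i v) = v := by
  have h : form M i (sigmaL M i v) = - form M i v := by
    rw [sigmaL_apply, map_sub, map_smul, form_ee, kk_diag]; simp only [smul_eq_mul]; ring
  rw [sigmaL_apply M i (sigmaL M i v), h, sigmaL_apply]
  module

noncomputable def sigma (i : B) : (B →₀ ℝ) ≃ₗ[ℝ] (B →₀ ℝ) :=
  LinearEquiv.ofLinear (sigmaL M i) (sigmaL M i)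
    (LinearMap.ext fun v => sigmaL_invol M i v)
    (LinearMap.ext fun v => sigmaL_invol M i v)

lemma sigma_apply (i : B) (v : B →₀ ℝ) :
    sigma M i v = v - (2 * form M i v) • ee i := sigmaL_apply M i v

lemma mul_aut_apply (f g : (B →₀ ℝ) ≃ₗ[ℝ] (B →₀ ℝ)) (v : B →₀ ℝ) :
    (f * g) v = f (g v) := rfl

lemma one_aut_apply (v : B →₀ ℝ) :
    (1 : (B →₀ ℝ) ≃ₗ[ℝ] (B →₀ ℝ)) v = v := rfl

end CoxInfAux

namespace CoxInfAux
variable {B : Type*} (M : CoxeterMatrix B)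

lemma trig0 (y t : ℝ) : Real.sin (y + t) + Real.sin (y - t) = 2 * Real.sin y * Real.cos t := by
  rw [Real.sin_add, Real.sin_sub]; ring

lemma trig1 (x t : ℝ) : Real.sin (x + 2*t) = 2 * Real.cos t * Real.sin (x + t) - Real.sin x := by
  have h := trig0 (x + t) t
  have e1 : x + t + t = x + 2*t := by ring
  have e2 : x + t - t = x := by ring
  rw [e1, e2] at h; linarith

lemma trig2 (x t : ℝ) :
    Real.sin (x + 3*t) = (4*(Real.cos t)^2 - 1) * Real.sin (x + t) - 2 * Real.cos t * Real.sin x := by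
  have h1 := trig1 (x + t) t
  have e1 : x + t + 2*t = x + 3*t := by ring
  have e2 : x + t + t = x + 2*t := by ring
  rw [e1, e2] at h1
  have h2 := trig1 x t
  linear_combination h1 + 2*Real.cos t * h2

/-- The key computation of `σᵢ ∘ σⱼ` on `p • eᵢ + q • eⱼ + z` with `z` orthogonal. -/
lemma phi_apply (i j : B) (p q : ℝ) (z : B →₀ ℝ)
    (hz1 : form M i z = 0) (hz2 : form M j z = 0) :
    (sigma M i * sigma M j) (p • ee i + q • ee j + z)
      = ((4*(kk M i j)^2 - 1)*p + 2*(kk M i j)*q) • ee i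
        + (-(2*(kk M i j)*p) - q) • ee j + z := by
  set t := kk M i j with ht
  have hsym : kk M j i = t := (kk_symm M j i).symm ▸ rfl
  rw [mul_aut_apply]
  have hfj : form M j (p • ee i + q • ee j + z) = t*p + q := by
    rw [map_add, map_add, map_smul, map_smul, hz2, form_ee, form_ee, kk_diag]
    rw [kk_symm M j i, ← ht]
    simp only [smul_eq_mul]; ring
  have h1 : (sigma M j) (p • ee i + q • ee j + z)
      = p • ee i + (-(2*t*p) - q) • ee j + z := by
    rw [sigma_apply, hfj]; module
  rw [h1]
  have hfi : form M i (p • ee i + (-(2*t*p) - q) • ee j + z) = p + t*(-(2*t*p) - q) := by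
    rw [map_add, map_add, map_smul, map_smul, hz1, form_ee, form_ee, kk_diag, ← ht]
    simp only [smul_eq_mul]; ring
  rw [sigma_apply, hfi]
  module

lemma phi_fix (i j : B) (n : ℕ) (z : B →₀ ℝ)
    (hz1 : form M i z = 0) (hz2 : form M j z = 0) :
    ((sigma M i * sigma M j)^n) z = z := by
  induction n with
  | zero => rw [pow_zero, one_aut_apply]
  | succ n ih =>
      rw [pow_succ, mul_aut_apply, mul_aut_apply]
      have h1 : sigma M j z = z := by rw [sigma_apply, hz2]; module
      have h2 : sigma M i z = z := by rw [sigma_apply, hz1]; module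
      rw [h1, h2, ih]

end CoxInfAux

namespace CoxInfAux
variable {B : Type*} (M : CoxeterMatrix B)

lemma key_trig (i j : B) (hm : 2 ≤ M i j) (n : ℕ) :
    ((sigma M i * sigma M j)^n) (Real.sin (Real.pi / (M i j : ℝ)) • ee i)
      = Real.sin (2*(n:ℝ)*(Real.pi / (M i j : ℝ)) + (Real.pi / (M i j : ℝ))) • ee i
        + Real.sin (2*(n:ℝ)*(Real.pi / (M i j : ℝ))) • ee j
    ∧ ((sigma M i * sigma M j)^n) (Real.sin (Real.pi / (M i j : ℝ)) • ee j)
      = (-Real.sin (2*(n:ℝ)*(Real.pi / (M i j : ℝ)))) • ee i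
        + (-Real.sin (2*(n:ℝ)*(Real.pi / (M i j : ℝ)) - (Real.pi / (M i j : ℝ)))) • ee j := by
  set th := Real.pi / (M i j : ℝ) with hth
  have hkk : kk M i j = -Real.cos th := by
    rw [kk, if_neg (by omega)]
  have hphi : ∀ p q : ℝ, (sigma M i * sigma M j) (p • ee i + q • ee j)
      = ((4*(Real.cos th)^2 - 1)*p - 2*(Real.cos th)*q) • ee i
        + ((2*(Real.cos th)*p) - q) • ee j := by
    intro p q
    have h := phi_apply M i j p q 0 (map_zero _) (map_zero _)
    rw [add_zero, add_zero, hkk] at h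
    rw [h]
    module
  induction n with
  | zero =>
      constructor
      · rw [pow_zero, one_aut_apply]
        norm_num
      · rw [pow_zero, one_aut_apply]
        norm_num
  | succ n ih =>
      obtain ⟨ih1, ih2⟩ := ih
      have hsucc : ∀ v : B →₀ ℝ, ((sigma M i * sigma M j)^(n+1)) v
          = (sigma M i * sigma M j) (((sigma M i * sigma M j)^n) v) := by
        intro v; rw [pow_succ', mul_aut_apply]
      constructor
      · rw [hsucc, ih1, hphi]
        have e1 : (4*(Real.cos th)^2 - 1) * Real.sin (2*(n:ℝ)*th + th)
              - 2*(Real.cos th) * Real.sin (2*(n:ℝ)*th)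
            = Real.sin (2*((n:ℝ)+1)*th + th) := by
          have := trig2 (2*(n:ℝ)*th) th
          have e : 2*(n:ℝ)*th + 3*th = 2*((n:ℝ)+1)*th + th := by ring
          rw [e] at this
          linarith
        have e2 : (2*(Real.cos th)) * Real.sin (2*(n:ℝ)*th + th) - Real.sin (2*(n:ℝ)*th)
            = Real.sin (2*((n:ℝ)+1)*th) := by
          have := trig1 (2*(n:ℝ)*th) th
          have e : 2*(n:ℝ)*th + 2*th = 2*((n:ℝ)+1)*th := by ring
          rw [e] at this
          linarith
        rw [e1, e2]
        push_cast
        ring_nf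
      · rw [hsucc, ih2, hphi]
        have e1 : (4*(Real.cos th)^2 - 1) * (-Real.sin (2*(n:ℝ)*th))
              - 2*(Real.cos th) * (-Real.sin (2*(n:ℝ)*th - th))
            = -Real.sin (2*((n:ℝ)+1)*th) := by
          have := trig2 (2*(n:ℝ)*th - th) th
          have e : 2*(n:ℝ)*th - th + 3*th = 2*((n:ℝ)+1)*th := by ring
          have e' : 2*(n:ℝ)*th - th + th = 2*(n:ℝ)*th := by ring
          rw [e, e'] at this
          linarith
        have e2 : (2*(Real.cos th)) * (-Real.sin (2*(n:ℝ)*th)) - (-Real.sin (2*(n:ℝ)*th - th))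
            = -Real.sin (2*((n:ℝ)+1)*th - th) := by
          have := trig1 (2*(n:ℝ)*th - th) th
          have e : 2*(n:ℝ)*th - th + 2*th = 2*((n:ℝ)+1)*th - th := by ring
          have e' : 2*(n:ℝ)*th - th + th = 2*(n:ℝ)*th := by ring
          rw [e, e'] at this
          linarith
        rw [e1, e2]
        push_cast
        ring_nf

lemma liftable : M.IsLiftable (fun i => sigma M i) := by
  intro i j
  by_cases hij : i = j
  · subst hij
    rw [M.diagonal, pow_one]
    apply LinearEquiv.ext
    intro v
    rw [mul_aut_apply]
    show sigma M i (sigma M i v) = v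
    exact sigmaL_invol M i v
  · rcases Nat.eq_zero_or_pos (M i j) with h0 | hpos
    · rw [h0, pow_zero]
    · have hm : 2 ≤ M i j := by
        have := M.off_diagonal i j hij
        omega
      have hmR : (1:ℝ) < ((M i j : ℕ):ℝ) := by exact_mod_cast hm
      have hth_pos : 0 < Real.pi / ((M i j : ℕ):ℝ) := by positivity
      have hth_lt : Real.pi / ((M i j : ℕ):ℝ) < Real.pi := div_lt_self Real.pi_pos hmR
      have hsin : Real.sin (Real.pi / ((M i j : ℕ):ℝ)) ≠ 0 :=
        ne_of_gt (Real.sin_pos_of_pos_of_lt_pi hth_pos hth_lt)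
      have h2pi : 2*((M i j : ℕ):ℝ)*(Real.pi / ((M i j : ℕ):ℝ)) = 2*Real.pi := by
        field_simp
      obtain ⟨k1, k2⟩ := key_trig M i j hm (M i j)
      rw [h2pi] at k1 k2
      have k1' : ((sigma M i * sigma M j)^(M i j)) (ee i) = ee i := by
        apply smul_right_injective (B →₀ ℝ) hsin
        show Real.sin (Real.pi / ((M i j : ℕ):ℝ)) • ((sigma M i * sigma M j)^(M i j)) (ee i)
          = Real.sin (Real.pi / ((M i j : ℕ):ℝ)) • ee i
        rw [← map_smul, k1,
          show 2*Real.pi + Real.pi / ((M i j : ℕ):ℝ) = Real.pi / ((M i j : ℕ):ℝ) + 2*Real.pi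
            by ring,
          Real.sin_add_two_pi, Real.sin_two_pi]
        module
      have k2' : ((sigma M i * sigma M j)^(M i j)) (ee j) = ee j := by
        apply smul_right_injective (B →₀ ℝ) hsin
        show Real.sin (Real.pi / ((M i j : ℕ):ℝ)) • ((sigma M i * sigma M j)^(M i j)) (ee j)
          = Real.sin (Real.pi / ((M i j : ℕ):ℝ)) • ee j
        rw [← map_smul, k2,
          show 2*Real.pi - Real.pi / ((M i j : ℕ):ℝ) = -(Real.pi / ((M i j : ℕ):ℝ)) + 2*Real.pi
            by ring,
          Real.sin_add_two_pi, Real.sin_two_pi, Real.sin_neg]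
        module
      apply LinearEquiv.ext
      intro v
      have hkk : kk M i j = -Real.cos (Real.pi / ((M i j : ℕ):ℝ)) := by
        rw [kk, if_neg (by omega)]
      have ht1 : (kk M i j)^2 < 1 := by
        have hc1 : Real.cos (Real.pi / ((M i j : ℕ):ℝ)) < 1 := by
          have := Real.cos_lt_cos_of_nonneg_of_le_pi (le_refl 0) hth_lt.le hth_pos
          rwa [Real.cos_zero] at this
        have hc2 : -1 < Real.cos (Real.pi / ((M i j : ℕ):ℝ)) := by
          have := Real.cos_lt_cos_of_nonneg_of_le_pi hth_pos.le (le_refl Real.pi) hth_lt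
          rwa [Real.cos_pi] at this
        rw [hkk]
        nlinarith [hc1, hc2]
      have hden : (1 - (kk M i j)^2) ≠ 0 := by nlinarith [ht1]
      have hsym : kk M j i = kk M i j := (kk_symm M i j).symm
      set x := form M i v with hx
      set y := form M j v with hy
      set p0 := (x - kk M i j * y)/(1 - (kk M i j)^2) with hp0
      set q0 := (y - kk M i j * x)/(1 - (kk M i j)^2) with hq0
      have hz1 : form M i (v - p0 • ee i - q0 • ee j) = 0 := by
        rw [map_sub, map_sub, map_smul, map_smul, form_ee, form_ee, kk_diag]
        simp only [smul_eq_mul]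
        rw [← hx, hp0, hq0]
        field_simp
        ring
      have hz2 : form M j (v - p0 • ee i - q0 • ee j) = 0 := by
        rw [map_sub, map_sub, map_smul, map_smul, form_ee, form_ee, kk_diag, hsym]
        simp only [smul_eq_mul]
        rw [← hy, hp0, hq0]
        field_simp
        ring
      have hdecomp : v = p0 • ee i + q0 • ee j + (v - p0 • ee i - q0 • ee j) := by module
      rw [one_aut_apply]
      nth_rewrite 1 [hdecomp]
      rw [map_add, map_add, map_smul, map_smul, k1', k2',
        phi_fix M i j (M i j) _ hz1 hz2]
      exact hdecomp.symm

end CoxInfAux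

namespace CoxInfAux
variable {B : Type*} (M : CoxeterMatrix B)

/-- The reflection `σ_b σ_a σ_b` is the reflection in the vector `β = e_a - 2 k_{ab} e_b`. -/
lemma refl_beta (a b : B) (v : B →₀ ℝ) :
    sigma M b (sigma M a (sigma M b v))
      = v - (2 * (form M a v - 2 * kk M a b * form M b v)) • (ee a - (2 * kk M a b) • ee b) := by
  have hsym : kk M b a = kk M a b := (kk_symm M a b).symm
  have h1 : sigma M b v = v - (2 * form M b v) • ee b := sigma_apply M b v
  have hf1 : form M a (sigma M b v) = form M a v - 2 * form M b v * kk M a b := by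
    rw [h1, map_sub, map_smul, form_ee]
    simp only [smul_eq_mul]
  have h2 : sigma M a (sigma M b v)
      = v - (2 * form M b v) • ee b - (2 * (form M a v - 2 * form M b v * kk M a b)) • ee a := by
    rw [sigma_apply, hf1, h1]
  have hf2 : form M b (sigma M a (sigma M b v))
      = - form M b v - 2 * kk M a b * form M a v + 4 * (kk M a b)^2 * form M b v := by
    rw [h2, map_sub, map_sub, map_smul, map_smul, form_ee, form_ee, kk_diag, hsym]
    simp only [smul_eq_mul]; ring
  rw [sigma_apply, hf2, h2]
  module

end CoxInfAux

namespace CoxInfAux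
variable {B : Type*} (M : CoxeterMatrix B)

lemma ee_apply_ne {i j : B} (h : i ≠ j) : ee i j = (0:ℝ) := Finsupp.single_eq_of_ne' h

lemma ee_apply_same (i : B) : ee i i = (1:ℝ) := Finsupp.single_eq_same

set_option maxHeartbeats 1600000 in
theorem final {B : Type*} {W : Type*} [Group W] (M : CoxeterMatrix B) (cs : CoxeterSystem M W)
    (a b c : B) (hab : a ≠ b) (hbc : b ≠ c) (hac : a ≠ c)
    (hst : M a b = 0 ∨ 3 ≤ M a b)
    (htu : M b c = 0 ∨ 3 ≤ M b c)
    (hus : M c a = 0 ∨ 3 ≤ M c a) :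
    Infinite (Subgroup.closure
      ({cs.simple c, cs.simple b * cs.simple a * cs.simple b} : Set W)) := by
  set y0 : W := cs.simple c * (cs.simple b * cs.simple a * cs.simple b) with hy0
  have hy0mem : y0 ∈ Subgroup.closure
      ({cs.simple c, cs.simple b * cs.simple a * cs.simple b} : Set W) := by
    apply mul_mem
    · exact Subgroup.subset_closure (by simp)
    · exact Subgroup.subset_closure (by simp)
  let ρ : W →* ((B →₀ ℝ) ≃ₗ[ℝ] (B →₀ ℝ)) := cs.lift ⟨fun i => sigma M i, liftable M⟩
  have hρs : ∀ i : B, ρ (cs.simple i) = sigma M i := fun i =>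
    cs.lift_apply_simple (liftable M) i
  have hA : kk M a b ≤ -(1/2 : ℝ) := kk_le_neg_half M hst
  have hC : kk M b c ≤ -(1/2 : ℝ) := kk_le_neg_half M htu
  have hD : kk M a c ≤ -(1/2 : ℝ) := by
    rw [kk_symm]
    exact kk_le_neg_half M hus
  set t0 := kk M a c - 2 * kk M a b * kk M b c with ht0def
  have ht0 : t0 ≤ -1 := by nlinarith [hA, hC, hD]
  set βv : B →₀ ℝ := ee a - (2 * kk M a b) • ee b with hβ
  have hfca : form M c (ee a) = kk M a c := by rw [form_ee, kk_symm]
  have hfcb : form M c (ee b) = kk M b c := by rw [form_ee, kk_symm]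
  have hfcc : form M c (ee c) = 1 := by rw [form_ee, kk_diag]
  have hfac : form M a (ee c) = kk M a c := form_ee M a c
  have hfbc : form M b (ee c) = kk M b c := form_ee M b c
  have hfcβ : form M c βv = t0 := by
    rw [hβ, map_sub, map_smul, hfca, hfcb, ht0def]
    simp only [smul_eq_mul]
  have hfaβ : form M a βv = 1 - 2 * (kk M a b)^2 := by
    rw [hβ, map_sub, map_smul, form_ee, form_ee, kk_diag]
    simp only [smul_eq_mul]; ring
  have hfbβ : form M b βv = - kk M a b := by
    rw [hβ, map_sub, map_smul, form_ee, form_ee, kk_diag, kk_symm M b a]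
    simp only [smul_eq_mul]; ring
  have hX : ∀ v : B →₀ ℝ, ρ y0 v = sigma M c (sigma M b (sigma M a (sigma M b v))) := by
    intro v
    simp only [hy0, map_mul, hρs, mul_aut_apply]
  have step : ∀ p q : ℝ, ρ y0 (p • ee c + q • βv)
      = ((4*t0^2 - 1)*p + 2*t0*q) • ee c + (-(2*t0*p) - q) • βv := by
    intro p q
    rw [hX, refl_beta]
    have hB : form M a (p • ee c + q • βv) - 2 * kk M a b * form M b (p • ee c + q • βv)
        = t0 * p + q := by
      rw [map_add, map_add, map_smul, map_smul, map_smul, map_smul, hfac, hfbc, hfaβ, hfbβ]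
      simp only [smul_eq_mul]
      rw [ht0def]; ring
    rw [hB, ← hβ]
    have h1 : (p • ee c + q • βv) - (2 * (t0 * p + q)) • βv
        = p • ee c + (-(2*t0*p) - q) • βv := by module
    rw [h1]
    have hfc : form M c (p • ee c + (-(2*t0*p) - q) • βv) = p + t0 * (-(2*t0*p) - q) := by
      rw [map_add, map_smul, map_smul, hfcc, hfcβ]
      simp only [smul_eq_mul]; ring
    rw [sigma_apply, hfc]
    module
  have growth : ∀ n : ℕ, ∃ p q : ℝ, (ρ y0 ^ n) (ee c) = p • ee c + q • βv
      ∧ 2*(n:ℝ)+1 ≤ p ∧ 0 ≤ q ∧ q ≤ p - 1 := by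
    intro n
    induction n with
    | zero =>
        refine ⟨1, 0, ?_, by norm_num, le_refl _, by norm_num⟩
        rw [pow_zero, one_aut_apply]
        module
    | succ n ih =>
        obtain ⟨p, q, hv, hp, hq0, hq⟩ := ih
        have hn0 : (0:ℝ) ≤ (n:ℝ) := Nat.cast_nonneg n
        have hp0 : (0:ℝ) ≤ p := by linarith
        have hd : (1:ℝ) ≤ -t0 := by linarith
        have e1 : (0:ℝ) ≤ (-t0) * (p - 1 - q) :=
          mul_nonneg (by linarith) (by linarith)
        have e2 : (0:ℝ) ≤ ((-t0) * ((-t0) - 1)) * p :=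
          mul_nonneg (mul_nonneg (by linarith) (by linarith)) hp0
        have e5 : (0:ℝ) ≤ ((-t0) - 1) * p := mul_nonneg (by linarith) hp0
        have e4 : (0:ℝ) ≤ (2*(-t0) - 1) * (p - 1 - q) :=
          mul_nonneg (by linarith) (by linarith)
        refine ⟨(4*t0^2 - 1)*p + 2*t0*q, -(2*t0*p) - q, ?_, ?_, ?_, ?_⟩
        · rw [pow_succ', mul_aut_apply, hv, step]
        · push_cast
          nlinarith [e1, e2, e5, hp, hd]
        · nlinarith [e5, hq]
        · nlinarith [e4, e2, hd]
  have hβc : βv c = 0 := by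
    rw [hβ, Finsupp.sub_apply, Finsupp.smul_apply, ee_apply_ne hac, ee_apply_ne hbc]
    simp
  have hcoord : ∀ p q : ℝ, (p • ee c + q • βv) c = p := by
    intro p q
    rw [Finsupp.add_apply, Finsupp.smul_apply, Finsupp.smul_apply, ee_apply_same, hβc]
    simp
  have hne : ∀ n : ℕ, 0 < n → y0 ^ n ≠ 1 := by
    intro n hn hcon
    obtain ⟨p, q, hv, hp, _, _⟩ := growth n
    have h1 : (ρ y0 ^ n) (ee c) = ee c := by
      rw [← map_pow, hcon, map_one, one_aut_apply]
    rw [hv] at h1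
    have h2 : p = 1 := by
      rw [← hcoord p q, h1, ee_apply_same]
    have hn1 : (1:ℝ) ≤ (n:ℝ) := by exact_mod_cast hn
    linarith
  have horder : orderOf y0 = 0 := orderOf_eq_zero_iff'.mpr hne
  have hinf : Infinite (Subgroup.zpowers y0) := by
    have hcard : Nat.card (Subgroup.zpowers y0) = 0 := by rw [Nat.card_zpowers, horder]
    rcases Nat.card_eq_zero.mp hcard with h | h
    · exact (h.false (1 : Subgroup.zpowers y0)).elim
    · exact h
  have hle : Subgroup.zpowers y0 ≤ Subgroup.closure
      ({cs.simple c, cs.simple b * cs.simple a * cs.simple b} : Set W) :=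
    Subgroup.zpowers_le.mpr hy0mem
  exact Infinite.of_injective (Subgroup.inclusion hle) (Subgroup.inclusion_injective hle)

end CoxInfAux


/-!
In a Coxeter system, if `s, t, u` are pairwise distinct simple generators with
`m_{st}, m_{tu}, m_{us} ≥ 3` (possibly infinite), then the subgroup generated by the
two elements `u` and `tst` is infinite.

Here `M a b = 0` encodes `m_{ab} = ∞` (the Mathlib convention for Coxeter matrices).
-/

/-- If the orders `m_{st}, m_{tu}, m_{us}` are each at least `3` (possibly infinite),
then the subgroup of `W` generated by `u` and `tst` is infinite. -/
theorem infinite_closure_u_tst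
    {B : Type*} {W : Type*} [Group W] (M : CoxeterMatrix B) (cs : CoxeterSystem M W)
    (a b c : B) (hab : a ≠ b) (hbc : b ≠ c) (hac : a ≠ c)
    (hst : M a b = 0 ∨ 3 ≤ M a b)
    (htu : M b c = 0 ∨ 3 ≤ M b c)
    (hus : M c a = 0 ∨ 3 ≤ M c a) :
    Infinite (Subgroup.closure
      ({cs.simple c, cs.simple b * cs.simple a * cs.simple b} : Set W)) := by
  exact CoxInfAux.final M cs a b c hab hbc hac hst htu hus
end

section
/- Let (W,S) be a Fuchsian Coxeter system and let s, t, u ∈ S be pairwise distinct generators with 2 ≤ m_{st} < ∞ and m_{tu} = m_{us} = ∞. Then T_W(vu) = T_W(u) for all v in the standard parabolic subgroup W_{st} generated by {s,t}. -/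
/-!
Lemma (Class IV, part 2): in a Fuchsian Coxeter system, if `s, t, u` are pairwise
distinct generators with `2 ≤ m_{st} < ∞` and `m_{tu} = m_{us} = ∞`, then
`T_W(vu) = T_W(u)` for all `v` in the standard parabolic subgroup `W_{st}`.

`m_{ab} = ∞` is encoded by the Coxeter matrix entry being `0` (the Mathlib convention).
-/

section ConeTypes

variable {B : Type*} {W : Type*} [Group W] {M : CoxeterMatrix B}

/-- The cone type of `w`: `T_W(w) = {z : ℓ(w z) = ℓ(w) + ℓ(z)}`. -/
def coneType (cs : CoxeterSystem M W) (w : W) : Set W :=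
  {z | cs.length (w * z) = cs.length w + cs.length z}

end ConeTypes

set_option linter.unusedSectionVars false

namespace ClassIVProof

open List CoxeterSystem

variable {B : Type*} {W : Type*} [Group W] {M : CoxeterMatrix B} (cs : CoxeterSystem M W)

local prefix:100 "s" => cs.simple
local prefix:100 "π" => cs.wordProd
local prefix:100 "ℓ" => cs.length

lemma semiconj_pow (i j : B) (t : ℕ) :
    s j * (s i * s j) ^ t = (s j * s i) ^ t * s j := by
  induction t with
  | zero => simp
  | succ t ih =>
    rw [pow_succ, ← mul_assoc, ih, pow_succ]
    group

lemma risAlt : ∀ (L : ℕ) (i j : B) (k : ℕ), k < L →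
    (cs.rightInvSeq (alternatingWord i j L)).getD k 1 = (s j * s i) ^ (L - 1 - k) * s j := by
  intro L
  induction L with
  | zero => omega
  | succ L IH =>
    intro i j k hk
    rw [alternatingWord_succ, concat_eq_append, ← concat_eq_append, rightInvSeq_concat]
    rw [concat_eq_append]
    rcases Nat.lt_or_ge k L with h | h
    · rw [List.getD_append _ _ 1 k (by
        simp [cs.length_rightInvSeq, length_alternatingWord]; omega)]
      have h1 : (1 : W) = MulAut.conj (s j) 1 := by simp
      rw [h1, List.getD_map, IH j i k h]
      have h2 : L + 1 - 1 - k = (L - 1 - k) + 1 := by omega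
      rw [h2]
      simp only [MulAut.conj_apply, cs.inv_simple]
      rw [← mul_assoc, semiconj_pow, pow_succ]
      group
    · have hkL : k = L := by omega
      subst hkL
      rw [List.getD_append_right _ _ 1 k (by
        simp [cs.length_rightInvSeq, length_alternatingWord])]
      simp [cs.length_rightInvSeq, length_alternatingWord]

lemma ris_braid_sq (i j : B) :
    cs.rightInvSeq (alternatingWord i j (2 * M i j)) =
    (cs.rightInvSeq (alternatingWord i j (2 * M i j))).take (M i j) ++
    (cs.rightInvSeq (alternatingWord i j (2 * M i j))).take (M i j) := by
  set m := M i j with hm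
  set R := cs.rightInvSeq (alternatingWord i j (2*m)) with hR
  have hlen : R.length = 2*m := by
    rw [hR, cs.length_rightInvSeq, length_alternatingWord]
  conv_lhs => rw [← take_append_drop m R]
  congr 1
  apply List.ext_getElem
  · simp only [length_drop, length_take, hlen]; omega
  · intro k h1 h2
    have hk : k < m := by
      simp only [length_take, length_drop, hlen] at h1; omega
    rw [List.getElem_drop, List.getElem_take]
    have e1 : R[m + k] = R.getD (m+k) 1 := by
      rw [List.getD_eq_getElem]
    have e2 : R[k] = R.getD k 1 := by
      rw [List.getD_eq_getElem]
    rw [e1, e2, hR, risAlt cs (2*m) i j (m+k) (by omega), risAlt cs (2*m) i j k (by omega)]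
    have h3 : 2*m - 1 - k = (2*m - 1 - (m+k)) + m := by omega
    rw [h3, pow_add, hm, cs.simple_mul_simple_pow' i j]
    group

/-! ### The sign permutation representation -/

open Classical in
noncomputable def nu (i : B) : W × ℤˣ → W × ℤˣ :=
  fun p => (s i * p.1 * s i, if p.1 = s i then -p.2 else p.2)

lemma nu_cancel (i : B) (w : W) : s i * (s i * w * s i) * s i = w := by
  rw [← mul_assoc, ← mul_assoc, cs.simple_mul_simple_self, one_mul, mul_assoc,
    cs.simple_mul_simple_self, mul_one]

lemma nu_cond_iff (i : B) (w : W) : s i * w * s i = s i ↔ w = s i := by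
  constructor
  · intro h
    have := congrArg (fun x => s i * x * s i) h
    simpa only [nu_cancel, cs.simple_mul_simple_cancel_right] using this
  · rintro rfl
    rw [cs.simple_mul_simple_self, one_mul]

lemma nu_involutive (i : B) : Function.Involutive (nu cs i) := by
  rintro ⟨t, ε⟩
  unfold nu
  simp only [nu_cancel cs]
  by_cases h : t = s i
  · subst h
    simp [cs.simple_mul_simple_self]
  · rw [if_neg h, if_neg (fun hc => h ((nu_cond_iff cs i t).mp hc))]

noncomputable def nuPerm (i : B) : Equiv.Perm (W × ℤˣ) := (nu_involutive cs i).toPerm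

lemma nuPerm_apply (i : B) (p : W × ℤˣ) : nuPerm cs i p = nu cs i p := rfl

lemma rightInvSeq_cons (i : B) (ω : List B) :
    cs.rightInvSeq (i :: ω) = ((π ω)⁻¹ * s i * π ω) :: cs.rightInvSeq ω := rfl

lemma prod_nuPerm_apply [DecidableEq W] (ω : List B) (t : W) (ε : ℤˣ) :
    ((ω.map (nuPerm cs)).prod) (t, ε) =
      (π ω * t * (π ω)⁻¹, (-1 : ℤˣ) ^ ((cs.rightInvSeq ω).count t) * ε) := by
  induction ω with
  | nil => simp
  | cons i ω ih =>
    rw [map_cons, prod_cons, Equiv.Perm.mul_apply, ih, nuPerm_apply]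
    unfold nu
    simp only []
    have hcond : π ω * t * (π ω)⁻¹ = s i ↔ t = (π ω)⁻¹ * s i * π ω := by
      constructor
      · intro h
        rw [← h]; group
      · intro h
        rw [h]; group
    have hfst : s i * (π ω * t * (π ω)⁻¹) * s i = π (i :: ω) * t * (π (i :: ω))⁻¹ := by
      rw [cs.wordProd_cons, mul_inv_rev, cs.inv_simple]
      group
    rw [hfst, rightInvSeq_cons cs, List.count_cons]
    by_cases h : t = (π ω)⁻¹ * s i * π ω
    · rw [if_pos (hcond.mpr h)]
      have hbeq : ((π ω)⁻¹ * s i * π ω == t) = true := by simpa using h.symm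
      rw [hbeq, if_pos rfl]
      congr 1
      rw [pow_add, pow_one, mul_comm ((-1:ℤˣ) ^ count t (cs.rightInvSeq ω)) (-1:ℤˣ)]
      rw [mul_assoc, neg_one_mul]
    · rw [if_neg (fun hc => h (hcond.mp hc))]
      have hbeq : ((π ω)⁻¹ * s i * π ω == t) = false := by simpa using fun hc => h hc.symm
      rw [hbeq, if_neg (by simp), add_zero]

lemma prod_map_alt (i j : B) (m : ℕ) :
    ((alternatingWord i j (2*m)).map (nuPerm cs)).prod = (nuPerm cs i * nuPerm cs j)^m := by
  induction m with
  | zero => simp [alternatingWord]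
  | succ m ih =>
    have h2 : 2 * (m + 1) = (2 * m + 1) + 1 := by omega
    rw [h2, alternatingWord_succ', alternatingWord_succ']
    have he : ¬ Even (2*m + 1) := by simp [Nat.even_add_one, parity_simps]
    have he2 : Even (2*m) := even_two_mul m
    rw [if_neg he, if_pos he2, map_cons, map_cons, prod_cons, prod_cons, ih, pow_succ']
    rw [mul_assoc]

lemma nu_liftable [DecidableEq W] : CoxeterMatrix.IsLiftable M (nuPerm cs) := by
  intro i j
  rw [← prod_map_alt]
  apply Equiv.ext
  rintro ⟨t, ε⟩
  rw [prod_nuPerm_apply]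
  have hπ : π (alternatingWord i j (2 * M i j)) = 1 := by
    rw [prod_alternatingWord_eq_mul_pow]
    rw [if_pos (even_two_mul _), one_mul, Nat.mul_div_cancel_left _ (by norm_num : 0 < 2),
      cs.simple_mul_simple_pow]
  have hcount : Even ((cs.rightInvSeq (alternatingWord i j (2 * M i j))).count t) := by
    rw [ris_braid_sq]
    rw [List.count_append]
    exact Even.add_self _
  obtain ⟨d, hd⟩ := hcount
  rw [hπ, hd, pow_add]
  simp [Int.units_mul_self]

/-! ### The eta cocycle and the strong exchange property -/

variable [DecidableEq W]

noncomputable def sgn : W →* Equiv.Perm (W × ℤˣ) :=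
  cs.lift ⟨nuPerm cs, nu_liftable cs⟩

lemma sgn_wordProd (ω : List B) : sgn cs (π ω) = (ω.map (nuPerm cs)).prod := by
  induction ω with
  | nil => simp [cs.wordProd_nil]
  | cons i ω ih =>
    rw [cs.wordProd_cons, map_mul, ih, map_cons, prod_cons]
    congr 1
    exact cs.lift_apply_simple (nu_liftable cs) i

noncomputable def eta (w t : W) : ℤˣ := ((sgn cs w) (t, 1)).2

lemma eta_spec (w t : W) (ω : List B) (hω : π ω = w) :
    eta cs w t = (-1 : ℤˣ) ^ ((cs.rightInvSeq ω).count t) := by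
  unfold eta
  rw [← hω, sgn_wordProd, prod_nuPerm_apply]
  simp

lemma sgn_apply (w t : W) (ε : ℤˣ) :
    (sgn cs w) (t, ε) = (w * t * w⁻¹, eta cs w t * ε) := by
  obtain ⟨ω, hω⟩ := cs.wordProd_surjective w
  rw [← hω, sgn_wordProd, prod_nuPerm_apply, eta_spec cs (π ω) t ω rfl]

lemma eta_mul (x y t : W) : eta cs (x * y) t = eta cs y t * eta cs x (y * t * y⁻¹) := by
  have h2 := sgn_apply cs (x * y) t 1
  rw [map_mul, Equiv.Perm.mul_apply, sgn_apply cs y t 1, sgn_apply cs x] at h2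
  have h3 := congrArg Prod.snd h2
  simp only [mul_one] at h3
  rw [← h3, mul_comm]

lemma eta_one (t : W) : eta cs 1 t = 1 := by
  rw [eta_spec cs 1 t [] (by simp)]
  simp

lemma eta_simple_self (i : B) : eta cs (s i) (s i) = -1 := by
  rw [eta_spec cs (s i) (s i) [i] (by simp)]
  simp

lemma eta_inv_mul (w t : W) : eta cs (w⁻¹) t * eta cs w (w⁻¹ * t * w) = 1 := by
  have h := eta_mul cs w w⁻¹ t
  rw [mul_inv_cancel, eta_one, inv_inv] at h
  exact h.symm

lemma eta_reflection (t : W) (ht : cs.IsReflection t) : eta cs t t = -1 := by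
  obtain ⟨w, i, rfl⟩ := ht
  have h1 : w * s i * w⁻¹ = w * (s i * w⁻¹) := by group
  rw [h1, eta_mul cs w (s i * w⁻¹)]
  have h2 : s i * w⁻¹ * (w * (s i * w⁻¹)) * (s i * w⁻¹)⁻¹ = s i := by group
  rw [h2]
  have h4 : eta cs (s i * w⁻¹) (w * (s i * w⁻¹)) = eta cs w⁻¹ (w * (s i * w⁻¹)) *
      eta cs (s i) (w⁻¹ * (w * (s i * w⁻¹)) * w) := by
    have := eta_mul cs (s i) (w⁻¹) (w * (s i * w⁻¹))
    rw [this]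
    congr 2
    group
  rw [h4]
  have h5 : w⁻¹ * (w * (s i * w⁻¹)) * w = w⁻¹ * (w * s i * w⁻¹) * w := by group
  have h6 : w⁻¹ * (w * s i * w⁻¹) * w = s i := by group
  rw [h5, h6, eta_simple_self]
  have h7 : eta cs w⁻¹ (w * (s i * w⁻¹)) * eta cs w ((w⁻¹) * (w * (s i * w⁻¹)) * w) = 1 :=
    eta_inv_mul cs w (w * (s i * w⁻¹))
  rw [h5, h6] at h7
  calc eta cs w⁻¹ (w * (s i * w⁻¹)) * (-1) * eta cs w (s i)
      = (eta cs w⁻¹ (w * (s i * w⁻¹)) * eta cs w (s i)) * (-1) := mul_right_comm _ _ _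
    _ = 1 * (-1) := by rw [h7]
    _ = -1 := one_mul _

lemma units_eq_one_of_ne_neg_one (u : ℤˣ) (h : u ≠ -1) : u = 1 := by
  rcases Int.units_eq_one_or u with h1 | h1
  · exact h1
  · exact absurd h1 h

lemma mem_ris_of_eta (w t : W) (h : eta cs w t = -1) (ω : List B) (hω : π ω = w) :
    t ∈ cs.rightInvSeq ω := by
  have hc := eta_spec cs w t ω hω
  rw [h] at hc
  rcases Nat.even_or_odd ((cs.rightInvSeq ω).count t) with he | ho
  · rw [(he.neg_one_pow : ((-1:ℤˣ)) ^ _ = 1)] at hc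
    exact absurd hc.symm (by decide)
  · have : (cs.rightInvSeq ω).count t ≠ 0 := by
      intro h0
      rw [h0] at ho
      exact (Nat.not_odd_zero) ho
    exact List.count_pos_iff.mp (Nat.pos_of_ne_zero this)

lemma eta_neg_of_right_inversion {w t : W} (ht : cs.IsReflection t)
    (hlt : ℓ (w * t) < ℓ w) : eta cs w t = -1 := by
  by_contra hne
  have h1 : eta cs w t = 1 := units_eq_one_of_ne_neg_one _ hne
  have h2 : eta cs (w * t) t = -1 := by
    rw [eta_mul cs w t t]
    have : t * t * t⁻¹ = t := by group
    rw [this, eta_reflection cs t ht, h1, mul_one]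
  obtain ⟨τ, hτred, hτ⟩ := cs.exists_reduced_word' (w * t)
  have hmem := mem_ris_of_eta cs (w * t) t h2 τ hτ.symm
  obtain ⟨j, hj, hget⟩ := List.mem_iff_getElem.mp hmem
  rw [cs.length_rightInvSeq] at hj
  have herase : π (τ.eraseIdx j) = w := by
    have h0 := cs.wordProd_mul_getD_rightInvSeq τ j
    rw [List.getD_eq_getElem _ 1 (by rw [cs.length_rightInvSeq]; exact hj), hget, ← hτ] at h0
    rw [← h0, mul_assoc, ht.mul_self, mul_one]
  have hlen1 : (τ.eraseIdx j).length + 1 = τ.length := List.length_eraseIdx_add_one hj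
  have hlen : ℓ w ≤ (τ.eraseIdx j).length := by
    rw [← herase]; exact cs.length_wordProd_le _
  have hwt : ℓ (w * t) = τ.length := by rw [hτ]; exact hτred
  omega

theorem right_exchange {w t : W} (ht : cs.IsReflection t) (hlt : ℓ (w * t) < ℓ w)
    (ω : List B) (hω : π ω = w) :
    ∃ j < ω.length, π (ω.eraseIdx j) = w * t := by
  have h := eta_neg_of_right_inversion cs ht hlt
  have hmem := mem_ris_of_eta cs w t h ω hω
  obtain ⟨j, hj, hget⟩ := List.mem_iff_getElem.mp hmem
  rw [cs.length_rightInvSeq] at hj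
  refine ⟨j, hj, ?_⟩
  have h0 := cs.wordProd_mul_getD_rightInvSeq ω j
  rw [List.getD_eq_getElem _ 1 (by rw [cs.length_rightInvSeq]; exact hj), hget, hω] at h0
  exact h0.symm

/-! ### Parabolic subgroups: reduced words, stripping, length additivity -/

lemma wordProd_mem_closure (I : Set B) (ω : List B) (hω : ∀ x ∈ ω, x ∈ I) :
    π ω ∈ Subgroup.closure (cs.simple '' I) := by
  induction ω with
  | nil =>
    rw [cs.wordProd_nil]; exact one_mem _
  | cons i ω ih =>
    rw [cs.wordProd_cons]
    exact mul_mem (Subgroup.subset_closure ⟨i, hω i (by simp), rfl⟩)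
      (ih fun x hx => hω x (by simp [hx]))

lemma exists_reduced_word_subset :
    ∀ (N : ℕ) (ω : List B), ω.length ≤ N →
    ∃ ω' : List B, (∀ x ∈ ω', x ∈ ω) ∧ cs.IsReduced ω' ∧ π ω' = π ω := by
  intro N
  induction N with
  | zero =>
    intro ω h
    have : ω = [] := List.eq_nil_of_length_eq_zero (by omega)
    subst this
    exact ⟨[], by simp, by simp [CoxeterSystem.IsReduced], rfl⟩
  | succ N IH =>
    intro ω hlen
    by_cases hred : cs.IsReduced ω
    · exact ⟨ω, fun x hx => hx, hred, rfl⟩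
    · rcases List.eq_nil_or_concat ω with rfl | ⟨ω₁, x, rfl⟩
      · exact absurd (by simp [CoxeterSystem.IsReduced]) hred
      · have hlen1 : ω₁.length ≤ N := by
          rw [List.concat_eq_append, List.length_append] at hlen
          simp at hlen; omega
        have hπ : π (ω₁.concat x) = π ω₁ * s x := cs.wordProd_concat x ω₁
        rcases cs.length_mul_simple (π ω₁) x with hc | hc
        · have hred1 : ¬ cs.IsReduced ω₁ := by
            intro hr
            apply hred
            unfold CoxeterSystem.IsReduced at hr ⊢
            rw [hπ, hc, hr, List.concat_eq_append, List.length_append]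
            simp
          obtain ⟨ω', hsub, hred', heq⟩ := IH ω₁ hlen1
          refine ⟨ω'.concat x, ?_, ?_, ?_⟩
          · intro y hy
            rw [List.concat_eq_append, List.mem_append] at hy ⊢
            rcases hy with hy | hy
            · exact Or.inl (hsub y hy)
            · exact Or.inr hy
          · unfold CoxeterSystem.IsReduced at hred' ⊢
            rw [cs.wordProd_concat, heq, hc, ← heq, hred', List.concat_eq_append,
              List.length_append]
            simp
          · rw [cs.wordProd_concat, heq, hπ]
        · have hlt : ℓ (π ω₁ * s x) < ℓ (π ω₁) := by omega
          obtain ⟨j, hj, herase⟩ := right_exchange cs (cs.isReflection_simple x) hlt ω₁ rfl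
          obtain ⟨ω', hsub, hred', heq⟩ := IH (ω₁.eraseIdx j)
            (by have := List.length_eraseIdx_add_one hj; omega)
          refine ⟨ω', fun y hy => ?_, hred', by rw [heq, herase, hπ]⟩
          rw [List.concat_eq_append, List.mem_append]
          exact Or.inl (List.eraseIdx_subset (hsub y hy))

lemma exists_reduced_I_word (I : Set B) (v : W)
    (hv : v ∈ Subgroup.closure (cs.simple '' I)) :
    ∃ ω : List B, (∀ x ∈ ω, x ∈ I) ∧ cs.IsReduced ω ∧ π ω = v := by
  refine Subgroup.closure_induction ?_ ?_ ?_ ?_ hv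
  · rintro x ⟨i, hi, rfl⟩
    exact ⟨[i], by simpa using hi, by simp [CoxeterSystem.IsReduced, cs.length_simple], by simp⟩
  · exact ⟨[], by simp, by simp [CoxeterSystem.IsReduced], by simp⟩
  · rintro x y hx hy ⟨ω₁, h1, hr1, he1⟩ ⟨ω₂, h2, hr2, he2⟩
    obtain ⟨ω', hsub, hred, heq⟩ :=
      exists_reduced_word_subset cs (ω₁ ++ ω₂).length (ω₁ ++ ω₂) le_rfl
    refine ⟨ω', fun z hz => ?_, hred, by rw [heq, cs.wordProd_append, he1, he2]⟩
    rcases List.mem_append.mp (hsub z hz) with h | h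
    exacts [h1 z h, h2 z h]
  · rintro x hx ⟨ω, h1, hr, he⟩
    exact ⟨ω.reverse, fun z hz => h1 z (List.mem_reverse.mp hz),
      (cs.isReduced_reverse_iff ω).mpr hr, by rw [cs.wordProd_reverse, he]⟩

lemma strip (I : Set B) : ∀ (n : ℕ) (z : W), ℓ z = n →
    ∃ d z₀, d ∈ Subgroup.closure (cs.simple '' I) ∧ z = d * z₀ ∧ ℓ z = ℓ d + ℓ z₀ ∧
      ∀ i ∈ I, ¬ cs.IsLeftDescent z₀ i := by
  intro n
  induction n using Nat.strong_induction_on with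
  | _ n IH =>
  intro z hz
  by_cases h : ∃ i ∈ I, cs.IsLeftDescent z i
  · obtain ⟨i, hi, hdes⟩ := h
    have h1 : ℓ (s i * z) + 1 = ℓ z := (cs.isLeftDescent_iff).mp hdes
    obtain ⟨d', z₀, hd', heq, hlen, hmin⟩ := IH (ℓ (s i * z)) (by omega) (s i * z) rfl
    have hz2 : z = (s i * d') * z₀ := by
      rw [mul_assoc, ← heq, cs.simple_mul_simple_cancel_left]
    refine ⟨s i * d', z₀, mul_mem (Subgroup.subset_closure ⟨i, hi, rfl⟩) hd', hz2, ?_, hmin⟩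
    have hub : ℓ (s i * d') ≤ 1 + ℓ d' := by
      have := cs.length_mul_le (s i) d'
      rwa [cs.length_simple] at this
    have hlb : ℓ z ≤ ℓ (s i * d') + ℓ z₀ := by
      rw [hz2]; exact cs.length_mul_le _ _
    omega
  · push_neg at h
    exact ⟨1, z, one_mem _, (one_mul z).symm, by simp, h⟩

lemma prod_take_succ (ω : List B) (n : ℕ) (hn : n < ω.length) :
    π (ω.take (n+1)) = π (ω.take n) * s (ω[n]) := by
  rw [List.take_succ, cs.wordProd_append, List.getElem?_eq_getElem hn]
  simp

lemma prod_take_getElem_drop (τ : List B) (n : ℕ) (hn : n < τ.length) :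
    π (τ.take n) * s (τ[n]) * π (τ.drop (n+1)) = π τ := by
  conv_rhs => rw [← List.take_append_drop (n+1) τ]
  rw [cs.wordProd_append, ← prod_take_succ cs τ n hn]

lemma mixed_deletion {ωv τ : List B} (h1 : cs.IsReduced ωv) (h2 : cs.IsReduced τ)
    (h : ℓ (π (ωv ++ τ)) < ωv.length + τ.length) :
    ∃ j < ωv.length, ∃ j' < τ.length,
      π ωv * π τ = π (ωv.eraseIdx j) * π (τ.eraseIdx j') := by
  classical
  set ω := ωv ++ τ with hω
  have hlenω : ω.length = ωv.length + τ.length := by simp [hω]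
  have hωpos : 1 ≤ ω.length := by omega
  have hwit : ¬ cs.IsReduced (ω.take ((ω.length - 1) + 1)) := by
    rw [(by omega : ω.length - 1 + 1 = ω.length), List.take_length]
    unfold CoxeterSystem.IsReduced
    omega
  have hex : ∃ k, ¬ cs.IsReduced (ω.take (k+1)) := ⟨ω.length - 1, hwit⟩
  set j' := Nat.find hex with hj'def
  have hQ : ¬ cs.IsReduced (ω.take (j'+1)) := Nat.find_spec hex
  have hmin : ∀ k, k < j' → cs.IsReduced (ω.take (k+1)) := by
    intro k hk
    exact not_not.mp (Nat.find_min hex hk)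
  have hj'le : j' ≤ ω.length - 1 := Nat.find_le hwit
  have hxlt : j' < ω.length := by omega
  have hredtake : cs.IsReduced (ω.take j') := by
    rcases Nat.eq_zero_or_pos j' with h0 | h0
    · rw [h0]
      simp [CoxeterSystem.IsReduced]
    · have := hmin (j' - 1) (by omega)
      rwa [(by omega : j' - 1 + 1 = j')] at this
  have hge : ωv.length ≤ j' := by
    by_contra hlt2
    push_neg at hlt2
    apply hQ
    have heq : ω.take (j'+1) = ωv.take (j'+1) := List.take_append_of_le_length (by omega)
    rw [heq]
    exact h1.take _
  set j₁ := j' - ωv.length with hj₁def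
  have hj₁lt : j₁ < τ.length := by omega
  have htake : ω.take j' = ωv ++ τ.take j₁ := by
    rw [(by omega : j' = ωv.length + j₁), hω, List.take_append, List.take_of_length_le (by omega),
      Nat.add_sub_cancel_left]
  have hlen_take : ℓ (π (ω.take j')) = j' := by
    have h5 := hredtake
    unfold CoxeterSystem.IsReduced at h5
    rw [h5, List.length_take]
    omega
  have hxval : ω[j']'hxlt = τ[j₁]'hj₁lt := List.getElem_append_right hge
  have hπsucc : π (ω.take (j'+1)) = π (ω.take j') * s (ω[j']) :=
    prod_take_succ cs ω j' hxlt
  have hlt2 : ℓ (π (ω.take j') * s (ω[j']'hxlt)) < ℓ (π (ω.take j')) := by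
    rcases cs.length_mul_simple (π (ω.take j')) (ω[j']) with hcc | hcc
    · exfalso
      apply hQ
      unfold CoxeterSystem.IsReduced
      rw [hπsucc, hcc, hlen_take, List.length_take]
      omega
    · omega
  obtain ⟨jj, hjj, herase⟩ :=
    right_exchange cs (cs.isReflection_simple _) hlt2 (ω.take j') rfl
  rw [List.length_take] at hjj
  have hjjlt : jj < j' := by omega
  rcases Nat.lt_or_ge jj ωv.length with hcase | hcase
  · refine ⟨jj, hcase, j₁, hj₁lt, ?_⟩
    have e1 : (ω.take j').eraseIdx jj = ωv.eraseIdx jj ++ τ.take j₁ := by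
      rw [htake, List.eraseIdx_append_of_lt_length hcase]
    have e4 : π (τ.eraseIdx j₁) = π (τ.take j₁) * π (τ.drop (j₁+1)) := by
      rw [List.eraseIdx_eq_take_drop_succ, cs.wordProd_append]
    rw [e4, ← mul_assoc]
    have e5 : π (ωv.eraseIdx jj) * π (τ.take j₁) = π (ω.take j') * s (ω[j']'hxlt) := by
      rw [← herase, e1, cs.wordProd_append]
    rw [e5, htake, cs.wordProd_append, hxval]
    rw [mul_assoc (π ωv), mul_assoc (π ωv)]
    congr 1
    exact (prod_take_getElem_drop cs τ j₁ hj₁lt).symm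
  · exfalso
    set jj₂ := jj - ωv.length with hjj₂def
    have hjj₂lt : jj₂ < (τ.take j₁).length := by
      rw [List.length_take]
      omega
    have e1 : (ω.take j').eraseIdx jj = ωv ++ (τ.take j₁).eraseIdx jj₂ := by
      rw [htake, List.eraseIdx_append_of_length_le hcase]
    have e2 : π ((τ.take j₁).eraseIdx jj₂) = π (τ.take j₁) * s (ω[j']'hxlt) := by
      have h6 := herase
      rw [e1, cs.wordProd_append, htake, cs.wordProd_append, mul_assoc] at h6
      exact mul_left_cancel h6
    have e3 : π τ = π ((τ.take j₁).eraseIdx jj₂) * π (τ.drop (j₁+1)) := by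
      rw [e2, hxval, mul_assoc]
      rw [← mul_assoc]
      exact (prod_take_getElem_drop cs τ j₁ hj₁lt).symm
    have l1 : ((τ.take j₁).eraseIdx jj₂).length + 1 = (τ.take j₁).length :=
      List.length_eraseIdx_add_one hjj₂lt
    have l2 : ℓ (π τ) ≤ ((τ.take j₁).eraseIdx jj₂).length + (τ.drop (j₁+1)).length := by
      rw [e3]
      calc ℓ (π ((τ.take j₁).eraseIdx jj₂) * π (τ.drop (j₁+1)))
          ≤ ℓ (π ((τ.take j₁).eraseIdx jj₂)) + ℓ (π (τ.drop (j₁+1))) := cs.length_mul_le _ _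
        _ ≤ _ := Nat.add_le_add (cs.length_wordProd_le _) (cs.length_wordProd_le _)
    have l3 : ℓ (π τ) = τ.length := h2
    rw [List.length_take, List.length_drop] at *
    omega

theorem length_closure_mul (I : Set B) :
    ∀ (n : ℕ) (x : W), ℓ x = n → (∀ i ∈ I, ¬ cs.IsLeftDescent x i) →
    ∀ v ∈ Subgroup.closure (cs.simple '' I), ℓ (v * x) = ℓ v + ℓ x := by
  intro n
  induction n using Nat.strong_induction_on with
  | _ n IH =>
  intro x hxn hxmin v hv
  have hle : ℓ (v * x) ≤ ℓ v + ℓ x := cs.length_mul_le v x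
  rcases eq_or_lt_of_le hle with heq | hlt
  · exact heq
  exfalso
  obtain ⟨ωv, hωvI, hωvred, hωveq⟩ := exists_reduced_I_word cs I v hv
  obtain ⟨τ, hτred, hτeq⟩ := cs.exists_reduced_word' x
  have hlv : ℓ v = ωv.length := by rw [← hωveq]; exact hωvred
  have hlx : ℓ x = τ.length := by rw [hτeq]; exact hτred
  have hprod : π (ωv ++ τ) = v * x := by
    rw [cs.wordProd_append, hωveq, ← hτeq]
  obtain ⟨j, hjlt, j₁, hj₁lt, heq2⟩ := mixed_deletion cs hωvred hτred
    (by rw [hprod, ← hlv, ← hlx]; exact hlt)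
  rw [hωveq, ← hτeq] at heq2
  -- v * x = v₁ * x₁
  set v₁ := π (ωv.eraseIdx j) with hv₁
  set x₁ := π (τ.eraseIdx j₁) with hx₁
  have hv₁mem : v₁ ∈ Subgroup.closure (cs.simple '' I) :=
    wordProd_mem_closure cs I _ (fun y hy => hωvI y (List.eraseIdx_subset hy))
  have hx₁len : ℓ x₁ + 1 ≤ ℓ x := by
    have h7 : ℓ x₁ ≤ (τ.eraseIdx j₁).length := by
      rw [hx₁]; exact cs.length_wordProd_le _
    have h8 := List.length_eraseIdx_add_one hj₁lt
    omega
  obtain ⟨p, x₀, hpmem, hx₁eq, hx₁len2, hx₀min⟩ := strip cs I (ℓ x₁) x₁ rfl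
  have hx₀len : ℓ x₀ < ℓ x := by omega
  have IH₀ := IH (ℓ x₀) (by omega) x₀ rfl hx₀min
  set q := v⁻¹ * v₁ * p with hq
  have hqmem : q ∈ Subgroup.closure (cs.simple '' I) :=
    mul_mem (mul_mem (inv_mem hv) hv₁mem) hpmem
  have hxq : x = q * x₀ := by
    have h9 : x = v⁻¹ * (v₁ * x₁) := by
      rw [← heq2]; group
    rw [h9, hx₁eq, hq]
    group
  have hlq : ℓ q + ℓ x₀ = ℓ x := by
    rw [hxq, IH₀ q hqmem]
  have hq1 : 1 ≤ ℓ q := by omega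
  obtain ⟨θ, hθI, hθred, hθeq⟩ := exists_reduced_I_word cs I q hqmem
  have hlθ : θ.length = ℓ q := by rw [← hθeq]; exact hθred.symm
  cases θ with
  | nil => simp at hlθ; omega
  | cons i₀ θ' =>
    have hi₀ : i₀ ∈ I := hθI i₀ (by simp)
    have hθ'red : cs.IsReduced θ' := by
      have h10 := hθred.drop 1
      simpa using h10
    have hθ'mem : π θ' ∈ Subgroup.closure (cs.simple '' I) :=
      wordProd_mem_closure cs I _ (fun y hy => hθI y (by simp [hy]))
    have hdesc : s i₀ * x = π θ' * x₀ := by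
      rw [hxq, ← hθeq, cs.wordProd_cons, mul_assoc (s i₀) (π θ') x₀,
        cs.simple_mul_simple_cancel_left]
    have hlen2 : ℓ (π θ' * x₀) = ℓ (π θ') + ℓ x₀ := IH₀ _ hθ'mem
    have hlθ' : ℓ (π θ') = θ'.length := hθ'red
    have hfin : cs.IsLeftDescent x i₀ := by
      unfold CoxeterSystem.IsLeftDescent
      rw [hdesc, hlen2, hlθ']
      simp only [List.length_cons] at hlθ
      omega
    exact hxmin i₀ hi₀ hfin

/-! ### Dihedral subgroups with infinite bond -/

lemma prepend_alt (i j : B) (K : ℕ) :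
    (if Even K then i else j) :: alternatingWord i j (K+1) = alternatingWord i j (K+2) := by
  rw [alternatingWord_succ' i j (K+1)]
  congr 1
  by_cases h : Even K
  · simp [h, Nat.even_add_one]
  · simp [h, Nat.even_add_one]

lemma swap_pow_ne_one (i j : B) (hp : ∀ l : ℕ, 1 ≤ l → (s i * s j)^l ≠ 1) :
    ∀ l : ℕ, 1 ≤ l → (s j * s i)^l ≠ 1 := by
  intro l hl hcon
  apply hp l hl
  have h1 : (s i * s j) = (s j * s i)⁻¹ := by
    rw [mul_inv_rev, cs.inv_simple, cs.inv_simple]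
  rw [h1, inv_pow, hcon, inv_one]

lemma isReduced_alt_step (i j : B) (hp : ∀ l : ℕ, 1 ≤ l → (s i * s j)^l ≠ 1) (l : ℕ)
    (hred : cs.IsReduced (alternatingWord j i l)) :
    cs.IsReduced (alternatingWord i j (l+1)) := by
  rw [alternatingWord_succ]
  unfold CoxeterSystem.IsReduced
  rw [cs.wordProd_concat, List.concat_eq_append, List.length_append,
    length_alternatingWord]
  simp only [List.length_singleton]
  have hlA : ℓ (π (alternatingWord j i l)) = l := by
    have := hred
    unfold CoxeterSystem.IsReduced at this
    rw [this, length_alternatingWord]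
  rcases cs.length_mul_simple (π (alternatingWord j i l)) j with hc | hc
  · rw [hc, hlA]
  · exfalso
    have hlt : ℓ (π (alternatingWord j i l) * s j) < ℓ (π (alternatingWord j i l)) := by
      omega
    have heta := eta_neg_of_right_inversion cs (cs.isReflection_simple j) hlt
    have hmem := mem_ris_of_eta cs _ (s j) heta (alternatingWord j i l) rfl
    obtain ⟨k, hk, hget⟩ := List.mem_iff_getElem.mp hmem
    rw [cs.length_rightInvSeq, length_alternatingWord] at hk
    have hval := risAlt cs l j i k hk
    rw [List.getD_eq_getElem _ 1
      (by rw [cs.length_rightInvSeq, length_alternatingWord]; exact hk), hget] at hval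
    apply hp (l - 1 - k + 1) (by omega)
    have h2 : (s i * s j)^(l-1-k) = s j * s i := by
      have h3 := congrArg (fun z => z * s i) hval
      simp only [mul_assoc, cs.simple_mul_simple_self, mul_one] at h3
      exact h3.symm
    rw [pow_succ, h2, mul_assoc, ← mul_assoc (s i), cs.simple_mul_simple_self, one_mul,
      cs.simple_mul_simple_self]

lemma isReduced_alternating (i j : B) (hp : ∀ l : ℕ, 1 ≤ l → (s i * s j)^l ≠ 1) :
    ∀ l, cs.IsReduced (alternatingWord i j l) ∧ cs.IsReduced (alternatingWord j i l) := by
  have hq := swap_pow_ne_one cs i j hp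
  intro l
  induction l with
  | zero =>
    constructor <;> (unfold CoxeterSystem.IsReduced; simp [alternatingWord])
  | succ l IHl =>
    exact ⟨isReduced_alt_step cs i j hp l IHl.2, isReduced_alt_step cs j i hq l IHl.1⟩

lemma reduced_two_letter_word_alt (i j : B) :
    ∀ ω : List B, (∀ x ∈ ω, x = i ∨ x = j) → cs.IsReduced ω →
    ω = alternatingWord i j ω.length ∨ ω = alternatingWord j i ω.length := by
  intro ω
  induction ω with
  | nil => intro _ _; left; rfl
  | cons x ω' IHω =>
    intro hmem hred
    have hred' : cs.IsReduced ω' := by simpa using hred.drop 1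
    have hx := hmem x (by simp)
    cases ω' with
    | nil =>
      rcases hx with rfl | rfl
      · right; rfl
      · left; rfl
    | cons h t =>
      have hmem' : ∀ y ∈ (h :: t), y = i ∨ y = j := fun y hy => hmem y (by simp [hy])
      have IH2 := IHω hmem' hred'
      have hxh : x ≠ h := by
        rintro rfl
        have hπ : π (x :: x :: t) = π t := by
          rw [cs.wordProd_cons, cs.wordProd_cons, cs.simple_mul_simple_cancel_left]
        have h5 := hred
        unfold CoxeterSystem.IsReduced at h5
        rw [hπ] at h5
        have h6 := cs.length_wordProd_le t
        simp at h5
        omega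
      rcases IH2 with he | he
      · left
        simp only [List.length_cons] at he
        have hhd : h = (if Even t.length then j else i) ∧ t = alternatingWord i j t.length := by
          rw [alternatingWord_succ'] at he
          exact ⟨(List.cons.inj he).1, (List.cons.inj he).2⟩
        have hxval : x = (if Even t.length then i else j) := by
          by_cases hK : Even t.length
          · rcases hx with rfl | rfl
            · simp [hK]
            · exfalso; exact hxh (by rw [hhd.1, if_pos hK])
          · rcases hx with rfl | rfl
            · exfalso; exact hxh (by rw [hhd.1, if_neg hK])
            · simp [hK]
        have h7 : x :: (h :: t) = alternatingWord i j (t.length + 2) := by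
          rw [← prepend_alt i j t.length, ← hxval]
          congr 1
        simp only [List.length_cons]
        exact h7
      · right
        simp only [List.length_cons] at he
        have hhd : h = (if Even t.length then i else j) ∧ t = alternatingWord j i t.length := by
          rw [alternatingWord_succ'] at he
          exact ⟨(List.cons.inj he).1, (List.cons.inj he).2⟩
        have hxval : x = (if Even t.length then j else i) := by
          by_cases hK : Even t.length
          · rcases hx with rfl | rfl
            · exfalso; exact hxh (by rw [hhd.1, if_pos hK])
            · simp [hK]
          · rcases hx with rfl | rfl
            · simp [hK]
            · exfalso; exact hxh (by rw [hhd.1, if_neg hK])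
        have h7 : x :: (h :: t) = alternatingWord j i (t.length + 2) := by
          rw [← prepend_alt j i t.length, ← hxval]
          congr 1
        simp only [List.length_cons]
        exact h7

lemma dihedral_ascent (i j : B) (hp : ∀ l : ℕ, 1 ≤ l → (s i * s j)^l ≠ 1) (hij : i ≠ j)
    (d : W) (hd : d ∈ Subgroup.closure (cs.simple '' ({i, j} : Set B)))
    (hasc : ℓ (s j * d) = ℓ d + 1) :
    ℓ (s i * (s j * d)) = ℓ (s j * d) + 1 := by
  have hy : s j * d ∈ Subgroup.closure (cs.simple '' ({i, j} : Set B)) :=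
    mul_mem (Subgroup.subset_closure ⟨j, by simp, rfl⟩) hd
  obtain ⟨ω, hωmem, hωred, hωeq⟩ := exists_reduced_I_word cs {i,j} (s j * d) hy
  have hlen : ω.length = ℓ d + 1 := by
    rw [← hasc, ← hωeq]; exact hωred.symm
  have hmem2 : ∀ x ∈ ω, x = i ∨ x = j := fun x hx => by simpa using hωmem x hx
  have hdisj := reduced_two_letter_word_alt cs i j ω hmem2 hωred
  cases ω with
  | nil => simp at hlen
  | cons h t =>
    have hK : t.length = ℓ d := by simpa using hlen
    have prep : ∀ x : B, x ≠ h → (x = i ∨ x = j) → ℓ (s x * (s j * d)) = t.length + 2 := by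
      intro x hxh hxij
      have hsx : s x * (s j * d) = π (x :: h :: t) := by
        rw [cs.wordProd_cons, hωeq]
      rcases hdisj with he | he
      · simp only [List.length_cons] at he
        have hhd : h = (if Even t.length then j else i) ∧ t = alternatingWord i j t.length := by
          rw [alternatingWord_succ'] at he
          exact ⟨(List.cons.inj he).1, (List.cons.inj he).2⟩
        have hxval : x = (if Even t.length then i else j) := by
          by_cases hKe : Even t.length
          · rcases hxij with rfl | rfl
            · simp [hKe]
            · exact absurd (by rw [hhd.1, if_pos hKe]) hxh
          · rcases hxij with rfl | rfl
            · exact absurd (by rw [hhd.1, if_neg hKe]) hxh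
            · simp [hKe]
        have h7 : x :: (h :: t) = alternatingWord i j (t.length + 2) := by
          rw [← prepend_alt i j t.length, ← hxval]
          congr 1
        rw [hsx, h7]
        have h8 := (isReduced_alternating cs i j hp (t.length+2)).1
        unfold CoxeterSystem.IsReduced at h8
        rw [h8, length_alternatingWord]
      · simp only [List.length_cons] at he
        have hhd : h = (if Even t.length then i else j) ∧ t = alternatingWord j i t.length := by
          rw [alternatingWord_succ'] at he
          exact ⟨(List.cons.inj he).1, (List.cons.inj he).2⟩
        have hxval : x = (if Even t.length then j else i) := by
          by_cases hKe : Even t.length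
          · rcases hxij with rfl | rfl
            · exact absurd (by rw [hhd.1, if_pos hKe]) hxh
            · simp [hKe]
          · rcases hxij with rfl | rfl
            · simp [hKe]
            · exact absurd (by rw [hhd.1, if_neg hKe]) hxh
        have h7 : x :: (h :: t) = alternatingWord j i (t.length + 2) := by
          rw [← prepend_alt j i t.length, ← hxval]
          congr 1
        rw [hsx, h7]
        have h8 := (isReduced_alternating cs i j hp (t.length+2)).2
        unfold CoxeterSystem.IsReduced at h8
        rw [h8, length_alternatingWord]
    have hh : h = j := by
      by_contra hhj
      have h9 := prep j (fun hc => hhj hc.symm) (Or.inr rfl)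
      rw [cs.simple_mul_simple_cancel_left] at h9
      omega
    have hfin := prep i (by rw [hh]; exact hij) (Or.inl rfl)
    rw [hfin, hasc, ← hK]



section Geometric

variable [Fintype B] [DecidableEq B]

noncomputable def Cm (M : CoxeterMatrix B) (i j : B) : ℝ :=
  - Real.cos (Real.pi / (M i j : ℝ))

noncomputable def av (i : B) : B → ℝ := Pi.single i 1

noncomputable def Bf (M : CoxeterMatrix B) (x : B → ℝ) (i : B) : ℝ :=
  ∑ k, x k * Cm M k i

lemma Cm_diag (M : CoxeterMatrix B) (i : B) : Cm M i i = 1 := by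
  unfold Cm
  rw [M.diagonal i]
  norm_num

lemma Cm_symm (M : CoxeterMatrix B) (i j : B) : Cm M i j = Cm M j i := by
  unfold Cm
  rw [M.symmetric i j]

lemma Bf_single (M : CoxeterMatrix B) (i k : B) : Bf M (av i) k = Cm M i k := by
  unfold Bf av
  rw [Finset.sum_eq_single i]
  · simp
  · intro b _ hb
    simp [Pi.single_apply, hb]
  · intro h
    exact absurd (Finset.mem_univ i) h

lemma Bf_add (M : CoxeterMatrix B) (x y : B → ℝ) (i : B) :
    Bf M (x + y) i = Bf M x i + Bf M y i := by
  unfold Bf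
  rw [← Finset.sum_add_distrib]
  congr 1
  ext k
  simp [add_mul]

lemma Bf_smul (M : CoxeterMatrix B) (c : ℝ) (x : B → ℝ) (i : B) :
    Bf M (c • x) i = c * Bf M x i := by
  unfold Bf
  rw [Finset.mul_sum]
  congr 1
  ext k
  simp [mul_assoc]

lemma Bf_sub (M : CoxeterMatrix B) (x y : B → ℝ) (i : B) :
    Bf M (x - y) i = Bf M x i - Bf M y i := by
  unfold Bf
  rw [← Finset.sum_sub_distrib]
  congr 1
  ext k
  simp [sub_mul]

noncomputable def sg (M : CoxeterMatrix B) (i : B) (x : B → ℝ) : B → ℝ :=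
  x - (2 * Bf M x i) • av i

lemma Bf_sg (M : CoxeterMatrix B) (i : B) (x : B → ℝ) :
    Bf M (sg M i x) i = - Bf M x i := by
  unfold sg
  rw [Bf_sub, Bf_smul, Bf_single, Cm_diag]
  ring

lemma sg_invol (M : CoxeterMatrix B) (i : B) : Function.Involutive (sg M i) := by
  intro x
  have h1 := Bf_sg M i x
  unfold sg
  rw [show Bf M (x - (2 * Bf M x i) • av i) i = - Bf M x i from h1]
  module

lemma sg_fix (M : CoxeterMatrix B) (i : B) (x : B → ℝ) (h : Bf M x i = 0) :
    sg M i x = x := by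
  unfold sg
  rw [h]
  module

/-- The braid relation for the geometric representation. -/
lemma sg_braid (M : CoxeterMatrix B) (i j : B) (hij : i ≠ j) (hne : M i j ≠ 0) :
    ∀ x, (sg M i ∘ sg M j)^[M i j] x = x := by
  intro x
  have hk2 : 2 ≤ M i j := by
    have := M.off_diagonal i j hij
    omega
  set φ : ℝ := Real.pi / (M i j : ℝ) with hφ
  set κ : ℝ := Real.cos φ with hκ
  set sθ : ℝ := Real.sin φ with hsθ
  have hφpos : 0 < φ := by
    apply div_pos Real.pi_pos
    exact_mod_cast (by omega : 0 < M i j)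
  have hφlt : φ < Real.pi := by
    rw [hφ, div_lt_iff₀ (by exact_mod_cast (by omega : 0 < M i j))]
    have h1 : (1:ℝ) < (M i j : ℝ) := by exact_mod_cast (by omega : 1 < M i j)
    nlinarith [Real.pi_pos]
  have hspos : 0 < sθ := Real.sin_pos_of_pos_of_lt_pi hφpos hφlt
  have hsne : sθ ≠ 0 := ne_of_gt hspos
  have hpyth : sθ^2 + κ^2 = 1 := by
    rw [hκ, hsθ]; exact Real.sin_sq_add_cos_sq φ
  have hCij : Cm M i j = -κ := by unfold Cm; rw [hκ, hφ]
  have hCji : Cm M j i = -κ := by rw [← Cm_symm]; exact hCij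
  set e₁ : B → ℝ := av i with he₁
  set e₂ : B → ℝ := sθ⁻¹ • (κ • av i + av j) with he₂
  have hB11 : Bf M e₁ i = 1 := by rw [he₁, Bf_single, Cm_diag]
  have hB1j : Bf M e₁ j = -κ := by rw [he₁, Bf_single, hCij]
  have hB2i : Bf M e₂ i = 0 := by
    rw [he₂, Bf_smul, Bf_add, Bf_smul, Bf_single, Bf_single, Cm_diag, hCji]
    ring
  have hB2j : Bf M e₂ j = sθ := by
    rw [he₂, Bf_smul, Bf_add, Bf_smul, Bf_single, Bf_single, Cm_diag, hCij]
    field_simp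
    nlinarith [hpyth]
  have hαj : av j = sθ • e₂ - κ • e₁ := by
    have h0 : sθ • e₂ = κ • av i + av j := by
      rw [he₂, smul_smul, mul_inv_cancel₀ hsne, one_smul]
    rw [h0, he₁]
    module
  set c₁ : ℝ := Bf M x i with hc₁
  set c₂ : ℝ := sθ⁻¹ * (Bf M x j + κ * c₁) with hc₂
  set y : B → ℝ := x - c₁ • e₁ - c₂ • e₂ with hy
  have hyi : Bf M y i = 0 := by
    rw [hy, Bf_sub, Bf_sub, Bf_smul, Bf_smul, hB11, hB2i, ← hc₁]
    ring
  have hyj : Bf M y j = 0 := by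
    rw [hy, Bf_sub, Bf_sub, Bf_smul, Bf_smul, hB1j, hB2j, hc₂]
    field_simp
    ring
  have hxdec : x = y + c₁ • e₁ + c₂ • e₂ := by
    rw [hy]
    module
  clear_value φ κ sθ e₁ e₂ c₁ c₂ y
  have key : ∀ u v : ℝ, (sg M i ∘ sg M j) (y + u • e₁ + v • e₂) =
      y + (u * (2*κ^2 - 1) - v * (2*sθ*κ)) • e₁ + (u * (2*sθ*κ) + v * (2*κ^2 - 1)) • e₂ := by
    intro u v
    have hBj : Bf M (y + u • e₁ + v • e₂) j = -u*κ + v*sθ := by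
      rw [Bf_add, Bf_add, Bf_smul, Bf_smul, hyj, hB1j, hB2j]
      ring
    have hstep1 : sg M j (y + u • e₁ + v • e₂) =
        y + (u*(1-2*κ^2) + v*(2*sθ*κ)) • e₁ + (2*sθ*κ*u + (1-2*sθ^2)*v) • e₂ := by
      unfold sg
      rw [hBj, hαj]
      match_scalars
      · ring
      · ring
      · ring
    have hBi : Bf M (y + (u*(1-2*κ^2) + v*(2*sθ*κ)) • e₁ + (2*sθ*κ*u + (1-2*sθ^2)*v) • e₂) i
        = u*(1-2*κ^2) + v*(2*sθ*κ) := by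
      rw [Bf_add, Bf_add, Bf_smul, Bf_smul, hyi, hB11, hB2i]
      ring
    rw [Function.comp_apply, hstep1]
    unfold sg
    rw [hBi, ← he₁]
    match_scalars
    · ring
    · ring
    · linear_combination (-2*v) * hpyth
  have iter : ∀ m : ℕ, (sg M i ∘ sg M j)^[m] x =
      y + (c₁ * Real.cos (2*m*φ) - c₂ * Real.sin (2*m*φ)) • e₁ +
          (c₁ * Real.sin (2*m*φ) + c₂ * Real.cos (2*m*φ)) • e₂ := by
    intro m
    induction m with
    | zero =>
      simp only [Function.iterate_zero, id_eq, Nat.cast_zero]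
      rw [show (2:ℝ)*0*φ = 0 by ring, Real.cos_zero, Real.sin_zero]
      conv_lhs => rw [hxdec]
      match_scalars <;> ring
    | succ m ih =>
      rw [Function.iterate_succ_apply', ih, key]
      push_cast
      rw [show 2*((m:ℝ)+1)*φ = 2*(m:ℝ)*φ + 2*φ by ring]
      rw [Real.cos_add, Real.sin_add, Real.cos_two_mul, Real.sin_two_mul]
      rw [← hκ, ← hsθ]
      match_scalars <;> ring
  have hkne : ((M i j : ℕ) : ℝ) ≠ 0 := by exact_mod_cast hne
  have hfin := iter (M i j)
  rw [show 2*((M i j : ℕ):ℝ)*φ = 2*Real.pi by rw [hφ]; field_simp] at hfin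
  rw [Real.cos_two_pi, Real.sin_two_pi] at hfin
  rw [hfin]
  conv_rhs => rw [hxdec]
  match_scalars <;> ring

noncomputable def sgPerm (M : CoxeterMatrix B) (i : B) : Equiv.Perm (B → ℝ) :=
  (sg_invol M i).toPerm

lemma sgPerm_apply (M : CoxeterMatrix B) (i : B) (x : B → ℝ) : sgPerm M i x = sg M i x := rfl

lemma perm_pow_apply {X : Type*} (f g : Equiv.Perm X) (m : ℕ) (x : X) :
    ((f * g)^m) x = (fun z => f (g z))^[m] x := by
  induction m with
  | zero => simp
  | succ m ih =>
    rw [pow_succ', Equiv.Perm.mul_apply, Equiv.Perm.mul_apply,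
      Function.iterate_succ_apply', ← ih]

lemma sg_liftable (M : CoxeterMatrix B) : CoxeterMatrix.IsLiftable M (sgPerm M) := by
  intro i j
  by_cases h0 : M i j = 0
  · rw [h0, pow_zero]
  · by_cases hij : i = j
    · subst hij
      rw [M.diagonal, pow_one]
      apply Equiv.ext
      intro x
      rw [Equiv.Perm.mul_apply, Equiv.Perm.one_apply, sgPerm_apply, sgPerm_apply]
      exact sg_invol M i x
    · apply Equiv.ext
      intro x
      rw [Equiv.Perm.one_apply, perm_pow_apply]
      exact sg_braid M i j hij h0 x

end Geometric

section InfOrder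

theorem pow_simple_mul_ne_one [Fintype B] [DecidableEq B] (i j : B) (hij : i ≠ j)
    (h0 : M i j = 0) : ∀ l : ℕ, 1 ≤ l → (s i * s j)^l ≠ 1 := by
  intro l hl hcon
  have hρ := congrArg (cs.lift ⟨sgPerm M, sg_liftable M⟩) hcon
  rw [map_pow, map_mul, cs.lift_apply_simple, cs.lift_apply_simple, map_one] at hρ
  have happ : ((sgPerm M i * sgPerm M j)^l) (av i) = av i := by rw [hρ]; rfl
  rw [perm_pow_apply] at happ
  have hCij : Cm M i j = -1 := by
    unfold Cm
    rw [h0]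
    norm_num
  have hCji : Cm M j i = -1 := by rw [Cm_symm]; exact hCij
  have hform : ∀ m : ℕ, (fun z => sgPerm M i (sgPerm M j z))^[m] (av i)
      = (2*(m:ℝ)+1) • av i + (2*(m:ℝ)) • av j := by
    intro m
    induction m with
    | zero =>
      simp only [Function.iterate_zero, id_eq, Nat.cast_zero]
      match_scalars <;> ring
    | succ m ih =>
      rw [Function.iterate_succ_apply', ih, sgPerm_apply, sgPerm_apply]
      have hBj : Bf M ((2*(m:ℝ)+1) • av i + (2*(m:ℝ)) • av j) j = -1 := by
        rw [Bf_add, Bf_smul, Bf_smul, Bf_single, Bf_single, hCij, Cm_diag]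
        ring
      have hstep1 : sg M j ((2*(m:ℝ)+1) • av i + (2*(m:ℝ)) • av j)
          = (2*(m:ℝ)+1) • av i + (2*(m:ℝ)+2) • av j := by
        unfold sg
        rw [hBj]
        match_scalars <;> ring
      rw [hstep1]
      have hBi : Bf M ((2*(m:ℝ)+1) • av i + (2*(m:ℝ)+2) • av j) i = -1 := by
        rw [Bf_add, Bf_smul, Bf_smul, Bf_single, Bf_single, hCji, Cm_diag]
        ring
      unfold sg
      rw [hBi]
      push_cast
      match_scalars <;> ring
  rw [hform l] at happ
  have hj := congrArg (fun f : B → ℝ => f j) happ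
  simp only [Pi.add_apply, Pi.smul_apply, smul_eq_mul] at hj
  unfold av at hj
  rw [Pi.single_eq_of_ne (Ne.symm hij), Pi.single_eq_same] at hj
  have hlr : (1:ℝ) ≤ (l:ℝ) := by exact_mod_cast hl
  nlinarith [hj]

end InfOrder


lemma keyMin (a c : B) (hac : a ≠ c)
    (hp : ∀ l : ℕ, 1 ≤ l → (s a * s c)^l ≠ 1) (z : W)
    (hz : ℓ (s c * z) = ℓ z + 1) :
    ℓ (s a * (s c * z)) = ℓ (s c * z) + 1 := by
  obtain ⟨d, z₀, hd, hzeq, hlen, hmin⟩ := strip cs {a, c} (ℓ z) z rfl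
  have H := length_closure_mul cs {a, c} (ℓ z₀) z₀ rfl hmin
  have hcd : s c * d ∈ Subgroup.closure (cs.simple '' ({a,c} : Set B)) :=
    mul_mem (Subgroup.subset_closure ⟨c, by simp, rfl⟩) hd
  have hacd : s a * (s c * d) ∈ Subgroup.closure (cs.simple '' ({a,c} : Set B)) :=
    mul_mem (Subgroup.subset_closure ⟨a, by simp, rfl⟩) hcd
  have e1 : s c * z = (s c * d) * z₀ := by rw [hzeq]; group
  have e2 : s a * (s c * z) = (s a * (s c * d)) * z₀ := by rw [hzeq]; group
  have l1 : ℓ (s c * z) = ℓ (s c * d) + ℓ z₀ := by rw [e1, H _ hcd]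
  have l2 : ℓ (s a * (s c * z)) = ℓ (s a * (s c * d)) + ℓ z₀ := by rw [e2, H _ hacd]
  have hasc : ℓ (s c * d) = ℓ d + 1 := by omega
  have hda := dihedral_ascent cs a c hp hac d hd hasc
  omega


end ClassIVProof

theorem coneType_vu_classIV_two_infinite
    (n : ℕ) [NeZero n] (hn : 3 ≤ n) (k : Fin n → ℕ) (hk : ∀ i, 2 ≤ k i)
    (hsum : ∑ i : Fin n, (1 : ℝ) / (k i : ℝ) < (n : ℝ) - 2)
    (M : CoxeterMatrix (Fin n))
    (hadj : ∀ i : Fin n, M i (i + 1) = k i)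
    (hnonadj : ∀ i j : Fin n, i ≠ j → j ≠ i + 1 → i ≠ j + 1 → M i j = 0)
    {W : Type*} [Group W] (cs : CoxeterSystem M W)
    (a b c : Fin n) (hab : a ≠ b) (hbc : b ≠ c) (hac : a ≠ c)
    (hst : 2 ≤ M a b) (htu : M b c = 0) (hus : M c a = 0) :
    ∀ v ∈ Subgroup.closure ({cs.simple a, cs.simple b} : Set W),
      coneType cs (v * cs.simple c) = coneType cs (cs.simple c) := by
  classical
  intro v hv
  have hac0 : M a c = 0 := by rw [M.symmetric]; exact hus
  have hpac : ∀ l : ℕ, 1 ≤ l → (cs.simple a * cs.simple c)^l ≠ 1 :=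
    ClassIVProof.pow_simple_mul_ne_one cs a c hac hac0
  have hpbc : ∀ l : ℕ, 1 ≤ l → (cs.simple b * cs.simple c)^l ≠ 1 :=
    ClassIVProof.pow_simple_mul_ne_one cs b c hbc htu
  have hmin : ∀ z : W, cs.length (cs.simple c * z) = cs.length z + 1 →
      ∀ i ∈ ({a, b} : Set (Fin n)), ¬ cs.IsLeftDescent (cs.simple c * z) i := by
    intro z hz i hi
    simp only [Set.mem_insert_iff, Set.mem_singleton_iff] at hi
    have hgrow : cs.length (cs.simple i * (cs.simple c * z))
        = cs.length (cs.simple c * z) + 1 := by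
      rcases hi with rfl | rfl
      · exact ClassIVProof.keyMin cs i c hac hpac z hz
      · exact ClassIVProof.keyMin cs i c hbc hpbc z hz
    unfold CoxeterSystem.IsLeftDescent
    omega
  have hPeq : ({cs.simple a, cs.simple b} : Set W) = cs.simple '' ({a, b} : Set (Fin n)) := by
    rw [Set.image_insert_eq, Set.image_singleton]
  rw [hPeq] at hv
  have hsc1 : cs.length (cs.simple c * 1) = cs.length (1:W) + 1 := by
    rw [mul_one, cs.length_simple, cs.length_one]
  have hminc : ∀ i ∈ ({a,b} : Set (Fin n)), ¬ cs.IsLeftDescent (cs.simple c) i := by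
    intro i hi
    have h := hmin 1 hsc1 i hi
    rwa [mul_one] at h
  have hvc : cs.length (v * cs.simple c) = cs.length v + 1 := by
    have h := ClassIVProof.length_closure_mul cs {a,b} (cs.length (cs.simple c))
      (cs.simple c) rfl hminc v hv
    rw [h, cs.length_simple]
  ext z
  simp only [coneType, Set.mem_setOf_eq]
  constructor
  · intro hz
    have h1 : cs.length (v * (cs.simple c * z))
        = cs.length (v * cs.simple c) + cs.length z := by
      rw [← mul_assoc]; exact hz
    have h2 : cs.length (v * (cs.simple c * z))
        ≤ cs.length v + cs.length (cs.simple c * z) := cs.length_mul_le _ _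
    have h3 : cs.length (cs.simple c * z) ≤ 1 + cs.length z := by
      have h4 := cs.length_mul_le (cs.simple c) z
      rwa [cs.length_simple] at h4
    rw [cs.length_simple]
    omega
  · intro hz
    have hz' : cs.length (cs.simple c * z) = cs.length z + 1 := by
      rw [hz, cs.length_simple]
      omega
    have hadd := ClassIVProof.length_closure_mul cs {a,b} (cs.length (cs.simple c * z))
      (cs.simple c * z) rfl (hmin z hz') v hv
    calc cs.length (v * cs.simple c * z) = cs.length (v * (cs.simple c * z)) := by
          rw [mul_assoc]
      _ = cs.length v + cs.length (cs.simple c * z) := hadd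
      _ = cs.length v + (cs.length z + 1) := by rw [hz']
      _ = cs.length (v * cs.simple c) + cs.length z := by rw [hvc]; omega
end
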